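/- Let Σ be a finite signature, f a function symbol of arity k not in Σ, and ψ a case-2 regular clause over Σ ∪ {f} (i.e., ψ is a disjunction of equations and negated equations between (Σ∪{f})-terms without ITE, each equation contains at most one occurrence of f, and f occurs in exactly one negated equation of ψ and nowhere else). Then the set {w ∈ T(Σ, {x1,…,xk}) : ψ{w/f} is valid} is a regular tree language over Σ ∪ {x1,…,xk} (with x1,…,xk treated as constants). -/

import Mathlib

namespace SyGuS

/-- Terms over a ranked alphabet: symbols `F`, each of arity `ar f`. -/
inductive Tm (F : Type) (ar : F → ℕ) : Type
  | app (f : F) (args : Fin (ar f) → Tm F ar) : Tm F ar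

/-- Arity function on `F ⊕ Fin k`: the `k` extra symbols are constants
(the variables `x₁,…,x_k`, treated as constants). -/
abbrev varAr {F : Type} (ar : F → ℕ) (k : ℕ) : F ⊕ Fin k → ℕ := Sum.elim ar fun _ => 0

/-- Arity function on `F ⊕ Unit`: the extra symbol is the function symbol `f` of arity `k`. -/
abbrev fAr {F : Type} (ar : F → ℕ) (k : ℕ) : F ⊕ Unit → ℕ := Sum.elim ar fun _ => k

/-- A (nonempty) first-order structure for the ranked alphabet `(F, ar)`. -/
structure Str (F : Type) (ar : F → ℕ) : Type 1 where
  D : Type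
  [nonemptyD : Nonempty D]
  interp : (f : F) → (Fin (ar f) → D) → D

attribute [instance] Str.nonemptyD

/-- Evaluation of a ground term in a structure. -/
def Tm.eval {F : Type} {ar : F → ℕ} (M : Str F ar) : Tm F ar → M.D
  | .app f args => M.interp f fun i => (args i).eval M

/-- First-order substitution: replace the variables `x₁,…,x_k` by terms. -/
def Tm.instVars {F : Type} {ar : F → ℕ} {k : ℕ} (σ : Fin k → Tm F ar) :
    Tm (F ⊕ Fin k) (varAr ar k) → Tm F ar
  | .app (Sum.inl g) args => .app g fun i => Tm.instVars σ (args i)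
  | .app (Sum.inr i) _ => σ i

/-- Second-order substitution `·{w/f}`: replace every application `f(s₁,…,s_k)` of the
distinguished symbol `f` by `w{s₁/x₁,…,s_k/x_k}`. -/
def Tm.soSubst {F : Type} {ar : F → ℕ} {k : ℕ} (w : Tm (F ⊕ Fin k) (varAr ar k)) :
    Tm (F ⊕ Unit) (fAr ar k) → Tm F ar
  | .app (Sum.inl g) args => .app g fun i => Tm.soSubst w (args i)
  | .app (Sum.inr _) args => Tm.instVars (fun i => Tm.soSubst w (args i)) w

/-- Renaming of symbols along an arity-preserving map. -/
def Tm.rename {F G : Type} {arF : F → ℕ} {arG : G → ℕ} (h : F → G)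
    (hh : ∀ f, arG (h f) = arF f) : Tm F arF → Tm G arG
  | .app f args => .app (h f) fun i => (args (Fin.cast (hh f) i)).rename h hh

/-- Equational consequence: `E ⊢ s = t` iff every structure satisfying all
equations of `E` also satisfies `s = t`. -/
def EqCons {F : Type} {ar : F → ℕ} (E : Set (Tm F ar × Tm F ar)) (s t : Tm F ar) : Prop :=
  ∀ M : Str F ar, (∀ e ∈ E, Tm.eval M e.1 = Tm.eval M e.2) → s.eval M = t.eval M

/-- Number of occurrences of the distinguished symbol `f` (the `Sum.inr` symbol) in a term. -/
def Tm.countF {F : Type} {ar : F → ℕ} {k : ℕ} : Tm (F ⊕ Unit) (fAr ar k) → ℕ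
  | .app (Sum.inl _) args => ∑ i, Tm.countF (args i)
  | .app (Sum.inr _) args => 1 + ∑ i, Tm.countF (args i)

/-- A literal: a (non-negated if `pos`, negated otherwise) equation between terms. -/
structure Lit (F : Type) (ar : F → ℕ) : Type where
  pos : Bool
  lhs : Tm F ar
  rhs : Tm F ar

def Lit.holds {F : Type} {ar : F → ℕ} (M : Str F ar) (l : Lit F ar) : Prop :=
  if l.pos then l.lhs.eval M = l.rhs.eval M else l.lhs.eval M ≠ l.rhs.eval M

/-- A clause: a disjunction of (possibly negated) equations, ITE-free by construction. -/
abbrev Clause (F : Type) (ar : F → ℕ) := List (Lit F ar)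

def Clause.holds {F : Type} {ar : F → ℕ} (M : Str F ar) (c : Clause F ar) : Prop :=
  ∃ l ∈ c, l.holds M

/-- A clause is valid if it holds in every nonempty structure. -/
def Clause.valid {F : Type} {ar : F → ℕ} (c : Clause F ar) : Prop :=
  ∀ M : Str F ar, c.holds M

/-- Number of occurrences of `f` in a literal (an equation). -/
def Lit.countF {F : Type} {ar : F → ℕ} {k : ℕ} (l : Lit (F ⊕ Unit) (fAr ar k)) : ℕ :=
  l.lhs.countF + l.rhs.countF

/-- Case-1 regular clause: every equation has at most one occurrence of `f`,
and `f` occurs only in non-negated equations. -/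
def Clause.Case1 {F : Type} {ar : F → ℕ} {k : ℕ} (c : Clause (F ⊕ Unit) (fAr ar k)) : Prop :=
  (∀ l ∈ c, l.countF ≤ 1) ∧ (∀ l ∈ c, l.pos = false → l.countF = 0)

/-- Case-2 regular clause: every equation has at most one occurrence of `f`, and `f`
occurs in exactly one negated equation of the clause and nowhere else. -/
def Clause.Case2 {F : Type} {ar : F → ℕ} {k : ℕ} (c : Clause (F ⊕ Unit) (fAr ar k)) : Prop :=
  (∀ l ∈ c, l.countF ≤ 1) ∧ (∀ l ∈ c, l.pos = true → l.countF = 0) ∧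
  (c.filter (fun l => l.pos = false ∧ l.countF ≠ 0)).length = 1

/-- A regular clause is one of case 1 or case 2. -/
def Clause.Regular {F : Type} {ar : F → ℕ} {k : ℕ} (c : Clause (F ⊕ Unit) (fAr ar k)) : Prop :=
  c.Case1 ∨ c.Case2

/-- Second-order substitution `·{w/f}` on literals. -/
def Lit.soSubst {F : Type} {ar : F → ℕ} {k : ℕ} (w : Tm (F ⊕ Fin k) (varAr ar k))
    (l : Lit (F ⊕ Unit) (fAr ar k)) : Lit F ar :=
  ⟨l.pos, Tm.soSubst w l.lhs, Tm.soSubst w l.rhs⟩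

/-- Second-order substitution `·{w/f}` on clauses. -/
def Clause.soSubst {F : Type} {ar : F → ℕ} {k : ℕ} (w : Tm (F ⊕ Fin k) (varAr ar k))
    (c : Clause (F ⊕ Unit) (fAr ar k)) : Clause F ar :=
  c.map (Lit.soSubst w)

/-- A regular-EUF formula: a finite conjunction of regular clauses. -/
structure RegEUF (F : Type) (ar : F → ℕ) (k : ℕ) : Type where
  clauses : List (Clause (F ⊕ Unit) (fAr ar k))
  regular : ∀ c ∈ clauses, c.Regular

/-- `w` is a solution for a regular-EUF formula if every clause becomes valid
after substituting `w` for `f`. -/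
def RegEUF.solves {F : Type} {ar : F → ℕ} {k : ℕ} (φ : RegEUF F ar k)
    (w : Tm (F ⊕ Fin k) (varAr ar k)) : Prop :=
  ∀ c ∈ φ.clauses, (c.soSubst w).valid

/-- Deterministic bottom-up tree automaton with a partial transition function. -/
structure DTA (F : Type) (ar : F → ℕ) : Type 1 where
  Q : Type
  [fintypeQ : Fintype Q]
  δ : (f : F) → (Fin (ar f) → Q) → Option Q
  final : Set Q

attribute [instance] DTA.fintypeQ

/-- Sequence a finite tuple of options. -/
def finSeq {Q : Type} : {n : ℕ} → (Fin n → Option Q) → Option (Fin n → Q)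
  | 0, _ => some (fun i => i.elim0)
  | _ + 1, f => (f 0).bind fun q => (finSeq fun i => f i.succ).map (Fin.cons q)

/-- The (partial) run of the automaton on a term: `δ` extended to terms. -/
def DTA.run {F : Type} {ar : F → ℕ} (A : DTA F ar) : Tm F ar → Option A.Q
  | .app f args => (finSeq fun i => A.run (args i)).bind fun qs => A.δ f qs

/-- The language accepted by the automaton. -/
def DTA.lang {F : Type} {ar : F → ℕ} (A : DTA F ar) : Set (Tm F ar) :=
  { t | ∃ q ∈ A.final, A.run t = some q }

/-- A tree language is regular if it is the language of some deterministic
bottom-up tree automaton. -/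
def IsRegularTreeLang {F : Type} {ar : F → ℕ} (L : Set (Tm F ar)) : Prop :=
  ∃ A : DTA F ar, L = A.lang

/-! ### Auxiliary development -/

section Aux

variable {G : Type} {arG : G → ℕ}

theorem Tm.eval_app (M : Str G arG) (g : G) (c : Fin (arG g) → Tm G arG) :
    Tm.eval M (.app g c) = M.interp g (fun i => (c i).eval M) := rfl

theorem eqCons_refl (E : Set (Tm G arG × Tm G arG)) (s : Tm G arG) : EqCons E s s :=
  fun _ _ => rfl

theorem eqCons_symm {E : Set (Tm G arG × Tm G arG)} {s t : Tm G arG}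
    (h : EqCons E s t) : EqCons E t s := fun M hM => (h M hM).symm

theorem eqCons_trans {E : Set (Tm G arG × Tm G arG)} {s t u : Tm G arG}
    (h : EqCons E s t) (h' : EqCons E t u) : EqCons E s u :=
  fun M hM => (h M hM).trans (h' M hM)

theorem eqCons_mono {E E' : Set (Tm G arG × Tm G arG)} {s t : Tm G arG}
    (hE : E ⊆ E') (h : EqCons E s t) : EqCons E' s t :=
  fun M hM => h M (fun e he => hM e (hE he))

theorem eqCons_of_mem {E : Set (Tm G arG × Tm G arG)} {e : Tm G arG × Tm G arG}
    (he : e ∈ E) : EqCons E e.1 e.2 := fun M hM => hM e he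

theorem eqCons_congr {E : Set (Tm G arG × Tm G arG)} {g : G}
    {a b : Fin (arG g) → Tm G arG} (h : ∀ i, EqCons E (a i) (b i)) :
    EqCons E (.app g a) (.app g b) := by
  intro M hM
  simp only [Tm.eval_app]
  exact congrArg _ (funext fun i => h i M hM)

/-- Swapping a single added equation does not change consequences. -/
theorem eqCons_union_swap {E : Set (Tm G arG × Tm G arG)} {x y s t : Tm G arG} :
    EqCons (E ∪ {(x, y)}) s t ↔ EqCons (E ∪ {(y, x)}) s t := by
  have key : ∀ (x y : Tm G arG), EqCons (E ∪ {(x, y)}) s t → EqCons (E ∪ {(y, x)}) s t := by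
    intro x y h M hM
    refine h M ?_
    rintro e (he | he)
    · exact hM e (Or.inl he)
    · simp only [Set.mem_singleton_iff] at he
      subst he
      exact (hM (y, x) (Or.inr rfl)).symm
  exact ⟨key x y, key y x⟩

/-! ### Subterm lists -/

def subtermsL : Tm G arG → List (Tm G arG)
  | .app g c => .app g c :: (List.ofFn fun i => subtermsL (c i)).flatten

theorem self_mem_subtermsL (t : Tm G arG) : t ∈ subtermsL t := by
  cases t with
  | app g c => exact List.mem_cons_self

theorem subtermsL_trans : ∀ {t u v : Tm G arG},
    u ∈ subtermsL t → v ∈ subtermsL u → v ∈ subtermsL t := by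
  intro t
  induction t with
  | app g c ih =>
    intro u v hu hv
    rcases List.mem_cons.mp hu with h | h
    · subst h; exact hv
    · rcases List.mem_flatten.mp h with ⟨piece, hp, hup⟩
      rcases List.mem_ofFn.mp hp with ⟨i, rfl⟩
      exact List.mem_cons.mpr (Or.inr (List.mem_flatten.mpr
        ⟨_, List.mem_ofFn.mpr ⟨i, rfl⟩, ih i hup hv⟩))

theorem children_mem_subtermsL {g : G} {c : Fin (arG g) → Tm G arG} (i : Fin (arG g)) :
    c i ∈ subtermsL (Tm.app g c) := by
  exact List.mem_cons.mpr (Or.inr (List.mem_flatten.mpr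
    ⟨_, List.mem_ofFn.mpr ⟨i, rfl⟩, self_mem_subtermsL _⟩))

theorem subtermsL_closed {t u : Tm G arG} (hu : u ∈ subtermsL t) {g : G}
    {c : Fin (arG g) → Tm G arG} (he : u = Tm.app g c) (i : Fin (arG g)) :
    c i ∈ subtermsL t := by
  subst he
  exact subtermsL_trans hu (children_mem_subtermsL i)

end Aux

/-! ### The canonical (congruence-closure) model over a subterm-closed list -/

section Canon

variable {G : Type} {arG : G → ℕ}
variable (L : List (Tm G arG)) (E : Set (Tm G arG × Tm G arG))

/-- Least index of the `E`-class of `L.get i`. -/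
noncomputable def minIdx (i : Fin L.length) : Fin L.length :=
  letI := Classical.dec
  (Finset.univ.filter fun j => EqCons E (L.get j) (L.get i)).min'
    ⟨i, by simp [eqCons_refl]⟩

theorem minIdx_spec (i : Fin L.length) :
    EqCons E (L.get (minIdx L E i)) (L.get i) := by
  classical
  have := Finset.min'_mem (α := Fin L.length)
    (Finset.univ.filter fun j => EqCons E (L.get j) (L.get i))
    ⟨i, by simp [eqCons_refl]⟩
  simp only [Finset.mem_filter] at this
  have h2 := this.2
  convert h2 using 2
  unfold minIdx; congr!

theorem minIdx_congr {i i' : Fin L.length}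
    (h : EqCons E (L.get i) (L.get i')) : minIdx L E i = minIdx L E i' := by
  classical
  apply le_antisymm
  · apply Finset.min'_le
    simp only [Finset.mem_filter, Finset.mem_univ, true_and]
    exact eqCons_trans (minIdx_spec L E i') (eqCons_symm h)
  · apply Finset.min'_le
    simp only [Finset.mem_filter, Finset.mem_univ, true_and]
    exact eqCons_trans (minIdx_spec L E i) h

theorem minIdx_idem (i : Fin L.length) :
    minIdx L E (minIdx L E i) = minIdx L E i :=
  minIdx_congr L E (minIdx_spec L E i)

/-- The matching predicate for the canonical interpretation. -/
def interpPred (g : G) (d : Fin (arG g) → Option (Fin L.length)) (j : Fin L.length) : Prop :=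
  ∃ a : Fin (arG g) → Tm G arG, L.get j = Tm.app g a ∧
    ∀ i, ∃ ji, d i = some ji ∧ EqCons E (a i) (L.get ji)

theorem interpPred_eqc {g : G} {d : Fin (arG g) → Option (Fin L.length)}
    {j j' : Fin L.length} (h : interpPred L E g d j) (h' : interpPred L E g d j') :
    EqCons E (L.get j) (L.get j') := by
  obtain ⟨a, ha, hc⟩ := h
  obtain ⟨a', ha', hc'⟩ := h'
  rw [ha, ha']
  refine eqCons_congr fun i => ?_
  obtain ⟨ji, hji, he⟩ := hc i
  obtain ⟨ji', hji', he'⟩ := hc' i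
  rw [hji] at hji'
  cases Option.some_injective _ hji'
  exact eqCons_trans he (eqCons_symm he')

open Classical in
noncomputable def interpC (g : G) (d : Fin (arG g) → Option (Fin L.length)) :
    Option (Fin L.length) :=
  if h : ∃ j, interpPred L E g d j then some (minIdx L E h.choose) else none

theorem interpC_eq {g : G} {d : Fin (arG g) → Option (Fin L.length)} {j : Fin L.length}
    (hj : interpPred L E g d j) : interpC L E g d = some (minIdx L E j) := by
  have hex : ∃ j, interpPred L E g d j := ⟨j, hj⟩
  simp only [interpC, dif_pos hex]
  exact congrArg some (minIdx_congr L E (interpPred_eqc L E hex.choose_spec hj))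

theorem interpC_cases (g : G) (d : Fin (arG g) → Option (Fin L.length)) :
    interpC L E g d = none ∨
      ∃ j, interpPred L E g d j ∧ interpC L E g d = some (minIdx L E j) := by
  by_cases h : ∃ j, interpPred L E g d j
  · exact Or.inr ⟨h.choose, h.choose_spec, interpC_eq L E h.choose_spec⟩
  · exact Or.inl (by simp only [interpC, dif_neg h])

/-- The canonical model. -/
noncomputable def MC : Str G arG where
  D := Option (Fin L.length)
  nonemptyD := ⟨none⟩
  interp := interpC L E

theorem MC_eval_app (g : G) (c : Fin (arG g) → Tm G arG) :
    Tm.eval (MC L E) (.app g c) = interpC L E g (fun i => Tm.eval (MC L E) (c i)) := rfl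

/-- Canonicity (soundness of evaluation): a defined value certifies a consequence. -/
theorem MC_sound : ∀ (v : Tm G arG) (j : Fin L.length),
    Tm.eval (MC L E) v = some j → EqCons E v (L.get j) ∧ minIdx L E j = j := by
  intro v
  induction v with
  | app g c ih =>
    intro j hj
    rw [MC_eval_app] at hj
    rcases interpC_cases L E g (fun i => Tm.eval (MC L E) (c i)) with h | ⟨j0, hp, he⟩
    · rw [h] at hj; exact absurd hj (by simp)
    · rw [he] at hj
      cases Option.some_injective _ hj
      obtain ⟨a, ha, hc⟩ := hp
      have h1 : EqCons E (Tm.app g c) (L.get j0) := by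
        rw [ha]
        refine eqCons_congr fun i => ?_
        obtain ⟨ji, hji, hei⟩ := hc i
        exact eqCons_trans (ih i ji hji).1 (eqCons_symm hei)
      exact ⟨eqCons_trans h1 (eqCons_symm (minIdx_spec L E j0)), minIdx_idem L E j0⟩

variable (hSub : ∀ t ∈ L, ∀ (g : G) (c : Fin (arG g) → Tm G arG),
    t = Tm.app g c → ∀ i, c i ∈ L)

include hSub in
/-- Evaluation of list members. -/
theorem MC_eval_get : ∀ (t : Tm G arG), t ∈ L → ∀ i : Fin L.length,
    L.get i = t → Tm.eval (MC L E) t = some (minIdx L E i) := by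
  intro t
  induction t with
  | app g c ih =>
    intro ht i hi
    rw [MC_eval_app]
    refine interpC_eq L E ?_
    refine ⟨c, hi, fun i' => ?_⟩
    have hci' : c i' ∈ L := hSub _ ht g c rfl i'
    obtain ⟨ni, hni⟩ := List.mem_iff_get.mp hci'
    refine ⟨minIdx L E ni, ih i' hci' ni hni, ?_⟩
    rw [← hni]
    exact eqCons_symm (minIdx_spec L E ni)

variable (hE : ∀ e ∈ E, e.1 ∈ L ∧ e.2 ∈ L)

include hSub hE in
theorem MC_models : ∀ e ∈ E, Tm.eval (MC L E) e.1 = Tm.eval (MC L E) e.2 := by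
  intro e he
  obtain ⟨h1, h2⟩ := hE e he
  obtain ⟨i1, hi1⟩ := List.mem_iff_get.mp h1
  obtain ⟨i2, hi2⟩ := List.mem_iff_get.mp h2
  rw [MC_eval_get L E hSub e.1 h1 i1 hi1, MC_eval_get L E hSub e.2 h2 i2 hi2]
  refine congrArg some (minIdx_congr L E ?_)
  rw [hi1, hi2]
  exact eqCons_of_mem he

include hSub hE in
theorem MC_complete {v : Tm G arG} {i : Fin L.length}
    (h : EqCons E v (L.get i)) : Tm.eval (MC L E) v = some (minIdx L E i) := by
  have := h (MC L E) (MC_models L E hSub hE)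
  rw [this]
  exact MC_eval_get L E hSub _ (List.mem_iff_get.mpr ⟨i, rfl⟩) i rfl

include hSub hE in
/-- Characterization of consequences `v = L.get i` via evaluation. -/
theorem eqc_get_iff {v : Tm G arG} {i : Fin L.length} :
    EqCons E v (L.get i) ↔
      ∃ j, Tm.eval (MC L E) v = some j ∧ EqCons E (L.get j) (L.get i) := by
  constructor
  · intro h
    exact ⟨minIdx L E i, MC_complete L E hSub hE h, minIdx_spec L E i⟩
  · rintro ⟨j, hj, he⟩
    exact eqCons_trans (MC_sound L E v j hj).1 he

end Canon

/-! ### Subterm relation -/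

section SubT

variable {G : Type} {arG : G → ℕ}

inductive SubT : Tm G arG → Tm G arG → Prop
  | refl (t) : SubT t t
  | child {v : Tm G arG} {g : G} {c : Fin (arG g) → Tm G arG} (i) :
      SubT v (c i) → SubT v (.app g c)

theorem SubT.trans : ∀ {a b c : Tm G arG}, SubT a b → SubT b c → SubT a c := by
  intro a b c hab hbc
  induction hbc with
  | refl => exact hab
  | child i h ih => exact SubT.child i ih

theorem SubT.of_child {g : G} {c : Fin (arG g) → Tm G arG} (i : Fin (arG g)) :
    SubT (c i) (Tm.app g c) := SubT.child i (SubT.refl _)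

/-- Every child of a subterm of `U` is a *proper* subterm of `U`. -/
theorem SubT.proper {g : G} {c : Fin (arG g) → Tm G arG} {U : Tm G arG}
    (h : SubT (Tm.app g c) U) (i : Fin (arG g)) :
    ∃ (g0 : G) (c0 : Fin (arG g0) → Tm G arG) (i0 : Fin (arG g0)),
      U = Tm.app g0 c0 ∧ SubT (c i) (c0 i0) := by
  cases h with
  | refl => exact ⟨g, c, i, rfl, SubT.refl _⟩
  | @child g0 c0 i0 h => exact ⟨g0, c0, i0, rfl, SubT.trans (SubT.of_child i) h⟩

end SubT

/-! ### Conservativity of adding one equation `U = B` with `U` of undefined value -/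

section Conserv

variable {G : Type} {arG : G → ℕ}
variable (L : List (Tm G arG)) (E : Set (Tm G arG × Tm G arG))
variable (hSub : ∀ t ∈ L, ∀ (g : G) (c : Fin (arG g) → Tm G arG),
    t = Tm.app g c → ∀ i, c i ∈ L)

/-- Redirect: replace a term by the list element its value points to, if defined. -/
noncomputable def redir (o : Option (Fin L.length)) (u : Tm G arG) : Tm G arG :=
  o.elim u fun j => L.get j

@[simp] theorem redir_some (j : Fin L.length) (u : Tm G arG) :
    redir L (some j) u = L.get j := rfl

@[simp] theorem redir_none (u : Tm G arG) : redir L none u = u := rfl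

/-- Canonical form: replace (hereditarily maximal) defined subterms by representatives. -/
noncomputable def nform : Tm G arG → Tm G arG
  | .app g c => .app g fun i => redir L (Tm.eval (MC L E) (c i)) (nform (c i))

theorem eval_child_some {g : G} {c : Fin (arG g) → Tm G arG}
    (h : Tm.eval (MC L E) (.app g c) ≠ none) (i : Fin (arG g)) :
    ∃ j, Tm.eval (MC L E) (c i) = some j := by
  rw [MC_eval_app] at h
  rcases interpC_cases L E g (fun i => Tm.eval (MC L E) (c i)) with h' | ⟨j, hp, _⟩
  · exact absurd h' h
  · obtain ⟨a, _, hc⟩ := hp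
    obtain ⟨ji, hji, _⟩ := hc i
    exact ⟨ji, hji⟩

theorem sub_eval_some : ∀ {v t : Tm G arG}, SubT v t →
    Tm.eval (MC L E) t ≠ none → Tm.eval (MC L E) v ≠ none := by
  intro v t h
  induction h with
  | refl => exact id
  | @child g c i _ ih =>
    intro ht
    obtain ⟨j, hj⟩ := eval_child_some L E ht i
    exact ih (by simp [hj]; exact Option.some_ne_none _)

include hSub in
theorem eval_get_some (i : Fin L.length) :
    Tm.eval (MC L E) (L.get i) = some (minIdx L E i) :=
  MC_eval_get L E hSub _ (List.mem_iff_get.mpr ⟨i, rfl⟩) i rfl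

include hSub in
theorem nform_eval : ∀ v : Tm G arG, Tm.eval (MC L E) (nform L E v) = Tm.eval (MC L E) v := by
  intro v
  induction v with
  | app g c ih =>
    show Tm.eval (MC L E) (.app g fun i => redir L (Tm.eval (MC L E) (c i)) (nform L E (c i)))
        = _
    rw [MC_eval_app, MC_eval_app]
    congr 1
    funext i
    cases h : Tm.eval (MC L E) (c i) with
    | none => rw [redir_none, ih i, h]
    | some j =>
      rw [redir_some]
      have hidem := (MC_sound L E (c i) j h).2
      rw [eval_get_some L E hSub, hidem]

noncomputable def bSize : Tm G arG → ℕ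
  | .app g c =>
    letI := Classical.dec
    if Tm.eval (MC L E) (.app g c) = none then 1 + ∑ i, bSize (c i) else 0

theorem bSize_of_some {v : Tm G arG} (h : Tm.eval (MC L E) v ≠ none) : bSize L E v = 0 := by
  cases v with
  | app g c =>
    rw [bSize]
    split
    · exact absurd ‹_› h
    · rfl

theorem bSize_le : ∀ {v t : Tm G arG}, SubT v t → Tm.eval (MC L E) t = none →
    bSize L E v ≤ bSize L E t := by
  intro v t h
  induction h with
  | refl => intro _; exact le_rfl
  | @child g c i hsub ih =>
    intro ht
    have : bSize L E (.app g c) = 1 + ∑ i', bSize L E (c i') := by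
      rw [bSize]; rw [if_pos ht]
    rw [this]
    cases hc : Tm.eval (MC L E) (c i) with
    | some j =>
      have : Tm.eval (MC L E) v ≠ none := sub_eval_some L E hsub (by simp [hc]; exact Option.some_ne_none _)
      rw [bSize_of_some L E this]
      exact Nat.zero_le _
    | none =>
      calc bSize L E v ≤ bSize L E (c i) := ih hc
        _ ≤ ∑ i', bSize L E (c i') := Finset.single_le_sum
            (f := fun i' => bSize L E (c i')) (fun _ _ => Nat.zero_le _) (Finset.mem_univ i)
        _ ≤ 1 + ∑ i', bSize L E (c i') := Nat.le_add_left _ _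

theorem bSize_lt {g : G} {c : Fin (arG g) → Tm G arG} {v : Tm G arG} {i : Fin (arG g)}
    (hsub : SubT v (c i)) (ht : Tm.eval (MC L E) (.app g c) = none) :
    bSize L E v < bSize L E (.app g c) := by
  have htop : bSize L E (.app g c) = 1 + ∑ i', bSize L E (c i') := by
    rw [bSize]; rw [if_pos ht]
  rw [htop]
  cases hc : Tm.eval (MC L E) (c i) with
  | some j =>
    have : Tm.eval (MC L E) v ≠ none := sub_eval_some L E hsub (by simp [hc]; exact Option.some_ne_none _)
    rw [bSize_of_some L E this]
    exact Nat.lt_of_lt_of_le Nat.zero_lt_one (Nat.le_add_right _ _)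
  | none =>
    have h1 : bSize L E v ≤ bSize L E (c i) := bSize_le L E hsub hc
    have h2 : bSize L E (c i) ≤ ∑ i', bSize L E (c i') :=
      Finset.single_le_sum (f := fun i' => bSize L E (c i')) (fun _ _ => Nat.zero_le _)
        (Finset.mem_univ i)
    omega

include hSub in
theorem bSize_nform : ∀ v : Tm G arG, bSize L E (nform L E v) = bSize L E v := by
  intro v
  induction v with
  | app g c ih =>
    show bSize L E (.app g fun i => redir L (Tm.eval (MC L E) (c i)) (nform L E (c i))) = _
    rw [bSize, bSize]
    rw [show Tm.eval (MC L E) (.app g fun i => redir L (Tm.eval (MC L E) (c i))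
      (nform L E (c i))) = Tm.eval (MC L E) (.app g c) from nform_eval L E hSub (.app g c)]
    split
    · congr 1
      refine Finset.sum_congr rfl fun i _ => ?_
      cases h : Tm.eval (MC L E) (c i) with
      | none => rw [redir_none, ih i]
      | some j =>
        rw [redir_some]
        rw [bSize_of_some L E (by rw [eval_get_some L E hSub]; exact Option.some_ne_none _),
          bSize_of_some L E (by simp [h]; exact Option.some_ne_none _)]
    · rfl

variable (U : Tm G arG)

include hSub in
theorem nform_no_self (hU : Tm.eval (MC L E) U = none) {g0 : G}
    {c0 : Fin (arG g0) → Tm G arG} {i0 : Fin (arG g0)} (hU0 : U = Tm.app g0 c0)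
    {v : Tm G arG} (hv : SubT v (c0 i0)) : nform L E v ≠ nform L E U := by
  intro he
  have hev : Tm.eval (MC L E) v = none := by
    have := nform_eval L E hSub v
    rw [he, nform_eval L E hSub] at this
    rw [← this, hU]
  have hb : bSize L E v = bSize L E U := by
    rw [← bSize_nform L E hSub v, he, bSize_nform L E hSub]
  have : bSize L E v < bSize L E U := by
    rw [hU0]
    exact bSize_lt L E hv (by rw [← hU0]; exact hU)
  omega

variable (iB : Fin L.length)

/-- The representative of `B`'s class. -/
noncomputable def BtT : Tm G arG := L.get (minIdx L E iB)

open Classical in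
/-- Collapse step used below: redirect defined values, and send `nform U` to `Bt`. -/
noncomputable def collapse (u : Tm G arG) (o : Option (Fin L.length)) : Tm G arG :=
  if u = nform L E U then BtT L E iB else redir L o u

noncomputable def nformB : Tm G arG → Tm G arG
  | .app g c => .app g fun i =>
      collapse L E U iB (nformB (c i)) (Tm.eval (MC L E) (nformB (c i)))

/-- Value map of the collapsed model. -/
noncomputable def nfB (v : Tm G arG) : Tm G arG :=
  collapse L E U iB (nformB L E U iB v) (Tm.eval (MC L E) (nformB L E U iB v))

theorem nformB_app (g : G) (c : Fin (arG g) → Tm G arG) :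
    nformB L E U iB (.app g c) = .app g fun i => nfB L E U iB (c i) := rfl

include hSub in
theorem nformB_eq_nform (hU : Tm.eval (MC L E) U = none) :
    ∀ v : Tm G arG, SubT v U → nformB L E U iB v = nform L E v := by
  intro v
  induction v with
  | app g c ih =>
    intro hsub
    rw [nformB_app]
    show _ = Tm.app g fun i => redir L (Tm.eval (MC L E) (c i)) (nform L E (c i))
    congr 1
    funext i
    have hci : SubT (c i) U := SubT.trans (SubT.of_child i) hsub
    have hrec := ih i hci
    rw [nfB, hrec]
    obtain ⟨g0, c0, i0, hU0, hsub0⟩ := SubT.proper hsub i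
    unfold collapse
    rw [if_neg (nform_no_self L E hSub U hU hU0 hsub0), nform_eval L E hSub]

/-- The collapsed model, forcing `U = B` while preserving all values of members of `L`. -/
noncomputable def Nstr : Str G arG where
  D := Tm G arG
  nonemptyD := ⟨U⟩
  interp := fun g cc => collapse L E U iB (.app g cc) (Tm.eval (MC L E) (.app g cc))

theorem Nstr_eval : ∀ v : Tm G arG, Tm.eval (Nstr L E U iB) v = nfB L E U iB v := by
  intro v
  induction v with
  | app g c ih =>
    show collapse L E U iB (.app g fun i => Tm.eval (Nstr L E U iB) (c i))
        (Tm.eval (MC L E) (.app g fun i => Tm.eval (Nstr L E U iB) (c i))) = _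
    have : (fun i => Tm.eval (Nstr L E U iB) (c i)) = fun i => nfB L E U iB (c i) :=
      funext fun i => ih i
    rw [this, nfB, nformB_app]

include hSub in
theorem nformB_mem (hU : Tm.eval (MC L E) U = none) :
    ∀ t ∈ L, nformB L E U iB t = nform L E t := by
  intro t
  induction t with
  | app g c ih =>
    intro ht
    rw [nformB_app]
    show _ = Tm.app g fun i => redir L (Tm.eval (MC L E) (c i)) (nform L E (c i))
    congr 1
    funext i
    have hci : c i ∈ L := hSub _ ht g c rfl i
    rw [nfB, ih i hci]
    obtain ⟨ni, hni⟩ := List.mem_iff_get.mp hci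
    have hne : nform L E (c i) ≠ nform L E U := by
      intro he
      have h1 : Tm.eval (MC L E) (c i) = none := by
        rw [← nform_eval L E hSub, he, nform_eval L E hSub, hU]
      rw [← hni, eval_get_some L E hSub] at h1
      simp at h1
    unfold collapse
    rw [if_neg hne, nform_eval L E hSub]

include hSub in
theorem nfB_mem (hU : Tm.eval (MC L E) U = none) {t : Tm G arG} (ht : t ∈ L)
    {i : Fin L.length} (hi : L.get i = t) :
    nfB L E U iB t = L.get (minIdx L E i) := by
  rw [nfB, nformB_mem L E hSub U iB hU t ht]
  have hev : Tm.eval (MC L E) (nform L E t) = some (minIdx L E i) := by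
    rw [nform_eval L E hSub, ← hi, eval_get_some L E hSub]
  have hne : nform L E t ≠ nform L E U := by
    intro he
    rw [he, nform_eval L E hSub, hU] at hev
    simp at hev
  unfold collapse
  rw [if_neg hne, hev, redir_some]

include hSub in
theorem Nstr_eval_get (hU : Tm.eval (MC L E) U = none) (i : Fin L.length) :
    Tm.eval (Nstr L E U iB) (L.get i) = L.get (minIdx L E i) := by
  rw [Nstr_eval]
  exact nfB_mem L E hSub U iB hU (List.mem_iff_get.mpr ⟨i, rfl⟩) rfl

include hSub in
theorem Nstr_eval_U (hU : Tm.eval (MC L E) U = none) :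
    Tm.eval (Nstr L E U iB) U = BtT L E iB := by
  rw [Nstr_eval, nfB, nformB_eq_nform L E hSub U iB hU U (SubT.refl U)]
  unfold collapse
  rw [if_pos rfl]

include hSub in
theorem conservativity (hE : ∀ e ∈ E, e.1 ∈ L ∧ e.2 ∈ L) (hU : Tm.eval (MC L E) U = none) {ip iq : Fin L.length}
    (h : EqCons (E ∪ {(U, L.get iB)}) (L.get ip) (L.get iq)) :
    EqCons E (L.get ip) (L.get iq) := by
  have hmodels : ∀ e ∈ E ∪ {(U, L.get iB)},
      Tm.eval (Nstr L E U iB) e.1 = Tm.eval (Nstr L E U iB) e.2 := by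
    rintro e (he | he)
    · obtain ⟨h1, h2⟩ := hE e he
      obtain ⟨i1, hi1⟩ := List.mem_iff_get.mp h1
      obtain ⟨i2, hi2⟩ := List.mem_iff_get.mp h2
      rw [Nstr_eval, Nstr_eval, nfB_mem L E hSub U iB hU h1 hi1,
        nfB_mem L E hSub U iB hU h2 hi2]
      refine congrArg _ (minIdx_congr L E ?_)
      rw [hi1, hi2]
      exact eqCons_of_mem he
    · simp only [Set.mem_singleton_iff] at he
      subst he
      show Tm.eval (Nstr L E U iB) U = Tm.eval (Nstr L E U iB) (L.get iB)
      rw [Nstr_eval_U L E hSub U iB hU, Nstr_eval_get L E hSub U iB hU iB]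
      rfl
  have h2 := h (Nstr L E U iB) hmodels
  rw [Nstr_eval_get L E hSub U iB hU, Nstr_eval_get L E hSub U iB hU] at h2
  have h3 : minIdx L E ip = minIdx L E iq := by
    have h4 := congrArg (Tm.eval (MC L E)) h2
    rw [eval_get_some L E hSub, eval_get_some L E hSub, minIdx_idem, minIdx_idem] at h4
    exact Option.some_injective _ h4
  refine eqCons_trans (eqCons_symm (minIdx_spec L E ip)) ?_
  rw [h3]
  exact minIdx_spec L E iq

end Conserv

/-! ### The fixpoint characterization of consequences of `E₀ ∪ {(U,B)}` -/

section FP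

variable {G : Type} {arG : G → ℕ}
variable (L : List (Tm G arG))
variable (hSub : ∀ t ∈ L, ∀ (g : G) (c : Fin (arG g) → Tm G arG),
    t = Tm.app g c → ∀ i, c i ∈ L)
variable (E₀ : Set (Tm G arG × Tm G arG)) (hE₀ : ∀ e ∈ E₀, e.1 ∈ L ∧ e.2 ∈ L)
variable (iB : Fin L.length)

/-- The theory `E₀` enlarged by a set of equations between list members. -/
def ERs (R : Set (Fin L.length × Fin L.length)) : Set (Tm G arG × Tm G arG) :=
  E₀ ∪ {e | ∃ r ∈ R, e = (L.get r.1, L.get r.2)}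

include hE₀ in
theorem ERs_hE (R : Set (Fin L.length × Fin L.length)) :
    ∀ e ∈ ERs L E₀ R, e.1 ∈ L ∧ e.2 ∈ L := by
  rintro e (he | ⟨r, _, rfl⟩)
  · exact hE₀ e he
  · exact ⟨List.mem_iff_get.mpr ⟨r.1, rfl⟩, List.mem_iff_get.mpr ⟨r.2, rfl⟩⟩

theorem ERs_mono {R R' : Set (Fin L.length × Fin L.length)} (h : R ⊆ R') :
    ERs L E₀ R ⊆ ERs L E₀ R' := by
  rintro e (he | ⟨r, hr, rfl⟩)
  · exact Or.inl he
  · exact Or.inr ⟨r, h hr, rfl⟩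

variable (U : Tm G arG)

/-- Add the equations `i = B` for all recognized classes `i` of `U`. -/
def addB (R : Set (Fin L.length × Fin L.length)) : Set (Fin L.length × Fin L.length) :=
  R ∪ {p | p.2 = iB ∧ EqCons (ERs L E₀ R) U (L.get p.1)}

theorem addB_mono {R R' : Set (Fin L.length × Fin L.length)} (h : R ⊆ R') :
    addB L E₀ iB U R ⊆ addB L E₀ iB U R' := by
  rintro p (hp | ⟨h2, he⟩)
  · exact Or.inl (h hp)
  · exact Or.inr ⟨h2, eqCons_mono (ERs_mono L E₀ h) he⟩

/-- One step of the fixpoint computation. -/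
def Gstep : Set (Fin L.length × Fin L.length) →o Set (Fin L.length × Fin L.length) where
  toFun R := {p | EqCons (ERs L E₀ (addB L E₀ iB U R)) (L.get p.1) (L.get p.2)}
  monotone' := by
    intro R R' h p hp
    exact eqCons_mono (ERs_mono L E₀ (addB_mono L E₀ iB U h)) hp

noncomputable def Rstar : Set (Fin L.length × Fin L.length) :=
  OrderHom.lfp (Gstep L E₀ iB U)

include hSub hE₀ in
theorem fp_correct (i j : Fin L.length) :
    EqCons (E₀ ∪ {(U, L.get iB)}) (L.get i) (L.get j) ↔ (i, j) ∈ Rstar L E₀ iB U := by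
  constructor
  · -- completeness of the fixpoint
    intro h
    have hfix : Gstep L E₀ iB U (Rstar L E₀ iB U) = Rstar L E₀ iB U :=
      OrderHom.map_lfp _
    by_cases hcls : ∃ i0, EqCons (ERs L E₀ (Rstar L E₀ iB U)) U (L.get i0)
    · rw [← hfix]
      intro M hM
      have hM0 : ∀ e ∈ ERs L E₀ (Rstar L E₀ iB U), Tm.eval M e.1 = Tm.eval M e.2 :=
        fun e he => hM e (ERs_mono L E₀ (Set.subset_union_left) he)
      obtain ⟨i0, hi0⟩ := hcls
      have hU0 : Tm.eval M U = Tm.eval M (L.get i0) := hi0 M hM0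
      have hpair : Tm.eval M (L.get i0) = Tm.eval M (L.get iB) :=
        hM (L.get i0, L.get iB) (Or.inr ⟨(i0, iB), Or.inr ⟨rfl, hi0⟩, rfl⟩)
      refine h M ?_
      rintro e (he | he)
      · exact hM0 e (Or.inl he)
      · simp only [Set.mem_singleton_iff] at he
        subst he
        exact hU0.trans hpair
    · have hU : Tm.eval (MC L (ERs L E₀ (Rstar L E₀ iB U))) U = none := by
        cases hval : Tm.eval (MC L (ERs L E₀ (Rstar L E₀ iB U))) U with
        | none => rfl
        | some j0 =>
          exact absurd ⟨j0, (MC_sound L _ U j0 hval).1⟩ hcls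
      have h' : EqCons (ERs L E₀ (Rstar L E₀ iB U) ∪ {(U, L.get iB)})
          (L.get i) (L.get j) := by
        intro M hM
        refine h M ?_
        rintro e (he | he)
        · exact hM e (Or.inl (Or.inl he))
        · exact hM e (Or.inr he)
      have hcons := conservativity L (ERs L E₀ (Rstar L E₀ iB U)) hSub U iB
        (ERs_hE L E₀ hE₀ _) hU h'
      rw [← hfix]
      exact eqCons_mono (ERs_mono L E₀ (Set.subset_union_left)) hcons
  · -- soundness of the fixpoint
    intro hmem
    have hpre : Gstep L E₀ iB U
        {p | EqCons (E₀ ∪ {(U, L.get iB)}) (L.get p.1) (L.get p.2)} ≤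
        {p | EqCons (E₀ ∪ {(U, L.get iB)}) (L.get p.1) (L.get p.2)} := by
      intro p hp
      intro M hM
      have hMhat : ∀ e ∈ ERs L E₀
          (addB L E₀ iB U {p | EqCons (E₀ ∪ {(U, L.get iB)}) (L.get p.1) (L.get p.2)}),
          Tm.eval M e.1 = Tm.eval M e.2 := by
        have hME : ∀ e ∈ ERs L E₀
            {p | EqCons (E₀ ∪ {(U, L.get iB)}) (L.get p.1) (L.get p.2)},
            Tm.eval M e.1 = Tm.eval M e.2 := by
          rintro e (he | ⟨r, hr, rfl⟩)
          · exact hM e (Or.inl he)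
          · exact hr M hM
        rintro e (he | ⟨r, hr, rfl⟩)
        · exact hM e (Or.inl he)
        · rcases hr with hr | ⟨h2, he2⟩
          · exact hr M hM
          · have hU2 : Tm.eval M U = Tm.eval M (L.get r.1) := he2 M hME
            have hUB : Tm.eval M U = Tm.eval M (L.get iB) :=
              hM (U, L.get iB) (Or.inr rfl)
            rw [h2]
            exact (hU2.symm.trans hUB)
      exact hp M hMhat
    exact OrderHom.lfp_le _ hpre hmem

include hSub hE₀ in
theorem Gstep_congr {U₁ U₂ : Tm G arG}
    (h : ∀ R : Set (Fin L.length × Fin L.length),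
      Tm.eval (MC L (ERs L E₀ R)) U₁ = Tm.eval (MC L (ERs L E₀ R)) U₂) :
    Gstep L E₀ iB U₁ = Gstep L E₀ iB U₂ := by
  have haddB : ∀ R, addB L E₀ iB U₁ R = addB L E₀ iB U₂ R := by
    intro R
    have : ∀ i, EqCons (ERs L E₀ R) U₁ (L.get i) ↔ EqCons (ERs L E₀ R) U₂ (L.get i) := by
      intro i
      rw [eqc_get_iff L _ hSub (ERs_hE L E₀ hE₀ R), eqc_get_iff L _ hSub (ERs_hE L E₀ hE₀ R),
        h R]
    unfold addB
    ext p
    simp only [Set.mem_union, Set.mem_setOf_eq, this]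
  apply OrderHom.ext
  funext R
  show {p : Fin L.length × Fin L.length |
      EqCons (ERs L E₀ (addB L E₀ iB U₁ R)) (L.get p.1) (L.get p.2)} =
    {p : Fin L.length × Fin L.length |
      EqCons (ERs L E₀ (addB L E₀ iB U₂ R)) (L.get p.1) (L.get p.2)}
  rw [haddB]

include hSub hE₀ in
theorem Rstar_congr {U₁ U₂ : Tm G arG}
    (h : ∀ R : Set (Fin L.length × Fin L.length),
      Tm.eval (MC L (ERs L E₀ R)) U₁ = Tm.eval (MC L (ERs L E₀ R)) U₂) :
    Rstar L E₀ iB U₁ = Rstar L E₀ iB U₂ := by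
  unfold Rstar
  rw [Gstep_congr L hSub E₀ hE₀ iB h]

end FP

/-! ### Validity of a ground clause via equational consequence -/

section ClauseValid

variable {G : Type} {arG : G → ℕ}

/-- The equations asserted by the negated literals of a clause. -/
def negTh (c : Clause G arG) : Set (Tm G arG × Tm G arG) :=
  {e | ∃ l ∈ c, l.pos = false ∧ e = (l.lhs, l.rhs)}

theorem clause_valid_iff (c : Clause G arG) :
    c.valid ↔ ∃ l ∈ c, l.pos = true ∧ EqCons (negTh c) l.lhs l.rhs := by
  constructor
  · intro hv
    set Lc := (c.map fun l => subtermsL l.lhs ++ subtermsL l.rhs).flatten with hLc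
    have hmem : ∀ l ∈ c, l.lhs ∈ Lc ∧ l.rhs ∈ Lc := by
      intro l hl
      constructor
      · exact List.mem_flatten.mpr ⟨_, List.mem_map.mpr ⟨l, hl, rfl⟩,
          List.mem_append.mpr (Or.inl (self_mem_subtermsL _))⟩
      · exact List.mem_flatten.mpr ⟨_, List.mem_map.mpr ⟨l, hl, rfl⟩,
          List.mem_append.mpr (Or.inr (self_mem_subtermsL _))⟩
    have hSub : ∀ t ∈ Lc, ∀ (g : G) (cc : Fin (arG g) → Tm G arG),
        t = Tm.app g cc → ∀ i, cc i ∈ Lc := by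
      intro t ht g cc he i
      rcases List.mem_flatten.mp ht with ⟨piece, hp, htp⟩
      rcases List.mem_map.mp hp with ⟨l, hl, rfl⟩
      rcases List.mem_append.mp htp with h | h
      · exact List.mem_flatten.mpr ⟨_, List.mem_map.mpr ⟨l, hl, rfl⟩,
          List.mem_append.mpr (Or.inl (subtermsL_closed h he i))⟩
      · exact List.mem_flatten.mpr ⟨_, List.mem_map.mpr ⟨l, hl, rfl⟩,
          List.mem_append.mpr (Or.inr (subtermsL_closed h he i))⟩
    have hE : ∀ e ∈ negTh c, e.1 ∈ Lc ∧ e.2 ∈ Lc := by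
      rintro e ⟨l, hl, _, rfl⟩
      exact hmem l hl
    obtain ⟨l, hl, hholds⟩ := hv (MC Lc (negTh c))
    cases hpos : l.pos with
    | false =>
      exfalso
      have heq := MC_models Lc (negTh c) hSub hE (l.lhs, l.rhs) ⟨l, hl, hpos, rfl⟩
      simp only [Lit.holds, hpos] at hholds
      exact hholds heq
    | true =>
      refine ⟨l, hl, hpos, ?_⟩
      simp only [Lit.holds, hpos, if_true] at hholds
      obtain ⟨i1, hi1⟩ := List.mem_iff_get.mp (hmem l hl).1
      obtain ⟨i2, hi2⟩ := List.mem_iff_get.mp (hmem l hl).2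
      rw [MC_eval_get Lc (negTh c) hSub _ (hmem l hl).1 i1 hi1,
        MC_eval_get Lc (negTh c) hSub _ (hmem l hl).2 i2 hi2] at hholds
      have hmin : minIdx Lc (negTh c) i1 = minIdx Lc (negTh c) i2 :=
        Option.some_injective _ hholds
      have e1 : EqCons (negTh c) l.lhs (Lc.get (minIdx Lc (negTh c) i1)) := by
        rw [← hi1]
        exact eqCons_symm (minIdx_spec Lc (negTh c) i1)
      refine eqCons_trans e1 ?_
      rw [hmin, ← hi2]
      exact minIdx_spec Lc (negTh c) i2
  · rintro ⟨l, hl, hpos, he⟩ M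
    by_cases hM : ∀ e ∈ negTh c, Tm.eval M e.1 = Tm.eval M e.2
    · refine ⟨l, hl, ?_⟩
      simp only [Lit.holds, hpos, if_true]
      exact he M hM
    · push_neg at hM
      obtain ⟨e, he', hne⟩ := hM
      obtain ⟨l', hl', hneg, rfl⟩ := he'
      refine ⟨l', hl', ?_⟩
      simp only [Lit.holds, hneg]
      exact hne

end ClauseValid

/-! ### Miscellaneous lemmas -/

section Misc

variable {F : Type} {ar : F → ℕ} {k : ℕ}

theorem countF_app_inl (g : F) (args : Fin (fAr ar k (Sum.inl g)) → Tm (F ⊕ Unit) (fAr ar k)) :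
    Tm.countF (Tm.app (Sum.inl g) args) = ∑ i, Tm.countF (args i) := rfl

theorem countF_app_inr (u : Unit) (args : Fin (fAr ar k (Sum.inr u)) → Tm (F ⊕ Unit) (fAr ar k)) :
    Tm.countF (Tm.app (Sum.inr u) args) = 1 + ∑ i, Tm.countF (args i) := rfl

theorem soSubst_eq_of_countF_zero :
    ∀ (t : Tm (F ⊕ Unit) (fAr ar k)), t.countF = 0 →
      ∀ (w w' : Tm (F ⊕ Fin k) (varAr ar k)), Tm.soSubst w t = Tm.soSubst w' t := by
  intro t
  induction t with
  | app f args ih =>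
    cases f with
    | inl g =>
      intro h0 w w'
      rw [countF_app_inl] at h0
      show Tm.app g (fun i => Tm.soSubst w (args i)) = Tm.app g (fun i => Tm.soSubst w' (args i))
      have hz : ∀ i, (args i).countF = 0 := fun i =>
        (Finset.sum_eq_zero_iff.mp h0) i (Finset.mem_univ i)
      congr 1
      funext i
      exact ih i (hz i) w w'
    | inr u =>
      intro h0
      rw [countF_app_inr] at h0
      omega
  
theorem finSeq_some {Q : Type} : ∀ {n : ℕ} (f : Fin n → Q),
    finSeq (fun i => some (f i)) = some f := by
  intro n
  induction n with
  | zero =>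
    intro f
    show some (fun i : Fin 0 => i.elim0) = some f
    exact congrArg some (funext fun i => i.elim0)
  | succ n ih =>
    intro f
    show Option.map (Fin.cons (f 0)) (finSeq fun i : Fin n => some (f i.succ)) = some f
    rw [ih (fun i => f i.succ)]
    refine congrArg some (funext fun i => ?_)
    refine Fin.cases ?_ ?_ i
    · rw [Fin.cons_zero]
    · intro j
      rw [Fin.cons_succ]

theorem filter_eq_singleton {α : Type*} {p : α → Bool} :
    ∀ {l : List α} {a : α}, l.filter p = [a] →
      ∃ u v, l = u ++ a :: v ∧ (∀ x ∈ u, ¬ p x) ∧ (∀ x ∈ v, ¬ p x) := by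
  intro l
  induction l with
  | nil => intro a h; simp [List.filter] at h
  | cons b l ih =>
    intro a h
    by_cases hp : p b
    · rw [List.filter_cons_of_pos hp] at h
      have h1 : b = a := by
        have := congrArg (fun l => l.head?) h
        simpa using this
      have h2 : List.filter p l = [] := by
        have := congrArg (fun l => l.tail) h
        simpa using this
      refine ⟨[], l, by rw [h1]; rfl, by simp, ?_⟩
      intro x hx
      have := List.filter_eq_nil_iff.mp h2
      exact this x hx
    · rw [List.filter_cons_of_neg (by simpa using hp)] at h
      obtain ⟨u, v, rfl, hu, hv⟩ := ih h
      refine ⟨b :: u, v, rfl, ?_, hv⟩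
      intro x hx
      rcases List.mem_cons.mp hx with rfl | hx'
      · exact hp
      · exact hu x hx'

end Misc

/-! ### Term-list helpers -/

section TermsL

variable {G : Type} {arG : G → ℕ}

def termsL (ts : List (Tm G arG)) : List (Tm G arG) := (ts.map subtermsL).flatten

theorem mem_termsL {ts : List (Tm G arG)} {t : Tm G arG} (h : t ∈ ts) : t ∈ termsL ts :=
  List.mem_flatten.mpr ⟨_, List.mem_map.mpr ⟨t, h, rfl⟩, self_mem_subtermsL t⟩

theorem termsL_sub (ts : List (Tm G arG)) :
    ∀ t ∈ termsL ts, ∀ (g : G) (c : Fin (arG g) → Tm G arG),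
      t = Tm.app g c → ∀ i, c i ∈ termsL ts := by
  intro t ht g c he i
  rcases List.mem_flatten.mp ht with ⟨piece, hp, htp⟩
  rcases List.mem_map.mp hp with ⟨s, hs, rfl⟩
  exact List.mem_flatten.mpr ⟨_, List.mem_map.mpr ⟨s, hs, rfl⟩, subtermsL_closed htp he i⟩

end TermsL

section LitCount

variable {F : Type} {ar : F → ℕ} {k : ℕ}

theorem lit_sides_countF_zero {l : Lit (F ⊕ Unit) (fAr ar k)} (h : l.countF = 0) :
    l.lhs.countF = 0 ∧ l.rhs.countF = 0 := by
  unfold Lit.countF at h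
  omega

theorem lit_soSubst_pos (w : Tm (F ⊕ Fin k) (varAr ar k)) (l : Lit (F ⊕ Unit) (fAr ar k)) :
    (Lit.soSubst w l).pos = l.pos := rfl

theorem lit_soSubst_lhs (w : Tm (F ⊕ Fin k) (varAr ar k)) (l : Lit (F ⊕ Unit) (fAr ar k)) :
    (Lit.soSubst w l).lhs = Tm.soSubst w l.lhs := rfl

theorem lit_soSubst_rhs (w : Tm (F ⊕ Fin k) (varAr ar k)) (l : Lit (F ⊕ Unit) (fAr ar k)) :
    (Lit.soSubst w l).rhs = Tm.soSubst w l.rhs := rfl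

end LitCount

/-! ### The solution automaton -/

section Automaton

variable {F : Type} {ar : F → ℕ} {k : ℕ}
variable (L : List (Tm F ar)) (E₀ : Set (Tm F ar × Tm F ar))

/-- The canonical model extended by an assignment for the variables. -/
noncomputable def MV (R : Set (Fin L.length × Fin L.length))
    (as : Fin k → Option (Fin L.length)) : Str (F ⊕ Fin k) (varAr ar k) where
  D := Option (Fin L.length)
  nonemptyD := ⟨none⟩
  interp := fun s => match s with
    | .inl g => interpC L (ERs L E₀ R) g
    | .inr i => fun _ => as i

/-- The state reached on `w`: the evaluation of `w` in all extended canonical models. -/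
noncomputable def stw (w : Tm (F ⊕ Fin k) (varAr ar k)) :
    (Fin L.length × Fin L.length → Bool) → (Fin k → Option (Fin L.length)) →
      Option (Fin L.length) :=
  fun Rb as => Tm.eval (MV L E₀ {x | Rb x = true} as) w

variable (ψ : Clause (F ⊕ Unit) (fAr ar k))

noncomputable def theDTA : DTA (F ⊕ Fin k) (varAr ar k) where
  Q := (Fin L.length × Fin L.length → Bool) → (Fin k → Option (Fin L.length)) →
      Option (Fin L.length)
  fintypeQ := inferInstance
  δ := fun s => match s with
    | .inl g => fun qs => some (fun Rb as =>
        interpC L (ERs L E₀ {x | Rb x = true}) g (fun i => qs i Rb as))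
    | .inr i => fun _ => some (fun _ as => as i)
  final := {q | ∃ w, stw L E₀ w = q ∧ (Clause.soSubst w ψ).valid}

theorem theDTA_run : ∀ w, (theDTA L E₀ ψ).run w = some (stw L E₀ w) := by
  intro w
  induction w with
  | app s args ih =>
    show (finSeq fun i => (theDTA L E₀ ψ).run (args i)).bind ((theDTA L E₀ ψ).δ s) = _
    rw [show (finSeq fun i => (theDTA L E₀ ψ).run (args i)) = some (fun i => stw L E₀ (args i))
      from (congrArg finSeq (funext ih)).trans (finSeq_some _)]
    cases s with
    | inl g => rfl
    | inr i => rfl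

/-- Substitution lemma: evaluating a substituted term is evaluation in the extended model. -/
theorem eval_instVars (R : Set (Fin L.length × Fin L.length)) (σ : Fin k → Tm F ar) :
    ∀ v : Tm (F ⊕ Fin k) (varAr ar k),
      Tm.eval (MC L (ERs L E₀ R)) (Tm.instVars σ v) =
        Tm.eval (MV L E₀ R (fun i => Tm.eval (MC L (ERs L E₀ R)) (σ i))) v := by
  intro v
  induction v with
  | app s args ih =>
    cases s with
    | inl g =>
      show Tm.eval (MC L (ERs L E₀ R)) (.app g fun i => Tm.instVars σ (args i)) = _
      rw [MC_eval_app]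
      show interpC L (ERs L E₀ R) g _ = interpC L (ERs L E₀ R) g _
      exact congrArg _ (funext fun i => ih i)
    | inr i => rfl

/-- The key congruence: states determine the values of one-occurrence substitutions. -/
theorem eval_soSubst_congr {w1 w2 : Tm (F ⊕ Fin k) (varAr ar k)}
    (hst : stw L E₀ w1 = stw L E₀ w2) :
    ∀ t : Tm (F ⊕ Unit) (fAr ar k), t.countF ≤ 1 →
      ∀ R : Set (Fin L.length × Fin L.length),
        Tm.eval (MC L (ERs L E₀ R)) (Tm.soSubst w1 t) =
          Tm.eval (MC L (ERs L E₀ R)) (Tm.soSubst w2 t) := by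
  classical
  intro t
  induction t with
  | app s args ih =>
    cases s with
    | inl g =>
      intro hc R
      rw [countF_app_inl] at hc
      show Tm.eval (MC L (ERs L E₀ R)) (.app g fun i => Tm.soSubst w1 (args i)) =
        Tm.eval (MC L (ERs L E₀ R)) (.app g fun i => Tm.soSubst w2 (args i))
      rw [MC_eval_app, MC_eval_app]
      refine congrArg _ (funext fun i => ?_)
      refine ih i ?_ R
      calc (args i).countF ≤ ∑ j, (args j).countF := Finset.single_le_sum
            (f := fun j => (args j).countF) (fun _ _ => Nat.zero_le _) (Finset.mem_univ i)
        _ ≤ 1 := hc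
    | inr uu =>
      intro hc R
      rw [countF_app_inr] at hc
      have hz : ∀ i, (args i).countF = 0 := by
        have hs : ∑ j, (args j).countF = 0 := by omega
        exact fun i => (Finset.sum_eq_zero_iff.mp hs) i (Finset.mem_univ i)
      show Tm.eval (MC L (ERs L E₀ R)) (Tm.instVars (fun i => Tm.soSubst w1 (args i)) w1) =
        Tm.eval (MC L (ERs L E₀ R)) (Tm.instVars (fun i => Tm.soSubst w2 (args i)) w2)
      rw [show (fun i => Tm.soSubst w2 (args i)) = (fun i => Tm.soSubst w1 (args i)) from
        funext fun i => soSubst_eq_of_countF_zero _ (hz i) w2 w1]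
      refine Eq.trans (eval_instVars L E₀ R _ w1) (Eq.trans ?_ (eval_instVars L E₀ R _ w2).symm)
      have hRset : {x : Fin L.length × Fin L.length | decide (x ∈ R) = true} = R := by
        ext x; simp
      have h1 := congrFun (congrFun hst (fun x => decide (x ∈ R)))
        (fun i => Tm.eval (MC L (ERs L E₀ R)) (Tm.soSubst w1 (args i)))
      unfold stw at h1
      rw [hRset] at h1
      exact h1

end Automaton

/-- For a finite signature `Σ = (F, ar)`, a fresh function symbol `f`
of arity `k`, and a case-2 regular clause (each equation contains at most one occurrence of `f`, and `f` occurs in exactly one negated equation of the clause and nowhere else), the set of candidate expressions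
`w ∈ T(Σ, {x₁,…,x_k})` such that `ψ{w/f}` is valid is a regular tree language over
`Σ ∪ {x₁,…,x_k}` (with the variables treated as constants). -/
theorem case2_solutions_regular {F : Type} [Fintype F] (ar : F → ℕ) (k : ℕ)
    (ψ : Clause (F ⊕ Unit) (fAr ar k)) (hψ : ψ.Case2) :
    IsRegularTreeLang {w : Tm (F ⊕ Fin k) (varAr ar k) | (ψ.soSubst w).valid} := by
  classical
  by_cases hne : Nonempty (Tm (F ⊕ Fin k) (varAr ar k))
  case neg =>
    refine ⟨{ Q := Unit, δ := fun _ _ => none, final := ∅ }, ?_⟩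
    ext w
    exact (hne ⟨w⟩).elim
  case pos =>
    obtain ⟨wst⟩ := hne
    obtain ⟨hle1, hpos0, hlen⟩ := hψ
    obtain ⟨lstar, hfil⟩ := List.length_eq_one_iff.mp hlen
    obtain ⟨uL, vL, hsplit, hu, hv⟩ := filter_eq_singleton hfil
    have hlstar_mem : lstar ∈ ψ := by
      rw [hsplit]
      exact List.mem_append.mpr (Or.inr List.mem_cons_self)
    have hlstar_pred : lstar.pos = false ∧ lstar.countF ≠ 0 := by
      have h1 : lstar ∈ ψ.filter (fun l => l.pos = false ∧ l.countF ≠ 0) := by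
        rw [hfil]
        exact List.mem_singleton_self _
      exact of_decide_eq_true (List.mem_filter.mp h1).2
    have hcount1 : lstar.countF = 1 := by
      have h1 := hle1 lstar hlstar_mem
      have h2 := hlstar_pred.2
      omega
    have hmemuv : ∀ l, (l ∈ uL ∨ l ∈ vL) → l ∈ ψ := by
      intro l hl
      rw [hsplit]
      rcases hl with h | h
      · exact List.mem_append.mpr (Or.inl h)
      · exact List.mem_append.mpr (Or.inr (List.mem_cons.mpr (Or.inr h)))
    have hothers : ∀ l, (l ∈ uL ∨ l ∈ vL) → l.countF = 0 := by
      intro l hl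
      cases hpos : l.pos with
      | true => exact hpos0 l (hmemuv l hl) hpos
      | false =>
        by_contra hc
        have hd : decide (l.pos = false ∧ l.countF ≠ 0) = true := decide_eq_true ⟨hpos, hc⟩
        rcases hl with h | h
        · exact hu l h hd
        · exact hv l h hd
    obtain ⟨aT, bT, haT, hbT, habmem, hpairIff⟩ :
        ∃ aT bT : Tm (F ⊕ Unit) (fAr ar k), aT.countF = 1 ∧ bT.countF = 0 ∧
          (bT = lstar.lhs ∨ bT = lstar.rhs) ∧
          ∀ (w : Tm (F ⊕ Fin k) (varAr ar k)) (E : Set (Tm F ar × Tm F ar)) (s t : Tm F ar),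
            EqCons (E ∪ {(Tm.soSubst w lstar.lhs, Tm.soSubst w lstar.rhs)}) s t ↔
              EqCons (E ∪ {(Tm.soSubst w aT, Tm.soSubst wst bT)}) s t := by
      unfold Lit.countF at hcount1
      by_cases hc : lstar.lhs.countF = 0
      · have hr : lstar.rhs.countF = 1 := by omega
        refine ⟨lstar.rhs, lstar.lhs, hr, hc, Or.inl rfl, ?_⟩
        intro w E s t
        rw [soSubst_eq_of_countF_zero lstar.lhs hc w wst]
        exact eqCons_union_swap
      · have hl1 : lstar.lhs.countF = 1 := by omega
        have hr : lstar.rhs.countF = 0 := by omega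
        refine ⟨lstar.lhs, lstar.rhs, hl1, hr, Or.inr rfl, ?_⟩
        intro w E s t
        rw [soSubst_eq_of_countF_zero lstar.rhs hr w wst]
    obtain ⟨base, hbase⟩ : ∃ base : List (Tm F ar),
        base = (ψ.map fun l => [Tm.soSubst wst l.lhs, Tm.soSubst wst l.rhs]).flatten :=
      ⟨_, rfl⟩
    obtain ⟨L, hL⟩ : ∃ L : List (Tm F ar), L = termsL base := ⟨_, rfl⟩
    have hSubL : ∀ t ∈ L, ∀ (g : F) (c : Fin (ar g) → Tm F ar),
        t = Tm.app g c → ∀ i, c i ∈ L := by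
      rw [hL]
      exact termsL_sub base
    have hsidemem : ∀ l ∈ ψ, Tm.soSubst wst l.lhs ∈ L ∧ Tm.soSubst wst l.rhs ∈ L := by
      intro l hl
      rw [hL, hbase]
      constructor <;>
        refine mem_termsL (List.mem_flatten.mpr ⟨_, List.mem_map.mpr ⟨l, hl, rfl⟩, ?_⟩)
      · exact List.mem_cons_self
      · exact List.mem_cons.mpr (Or.inr List.mem_cons_self)
    obtain ⟨E₀, hE₀def⟩ : ∃ E₀ : Set (Tm F ar × Tm F ar),
        E₀ = {e | ∃ l, (l ∈ uL ∨ l ∈ vL) ∧ l.pos = false ∧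
          e = (Tm.soSubst wst l.lhs, Tm.soSubst wst l.rhs)} := ⟨_, rfl⟩
    have hE₀ : ∀ e ∈ E₀, e.1 ∈ L ∧ e.2 ∈ L := by
      rw [hE₀def]
      rintro e ⟨l, hl, _, rfl⟩
      exact ⟨(hsidemem l (hmemuv l hl)).1, (hsidemem l (hmemuv l hl)).2⟩
    have hBmem : Tm.soSubst wst bT ∈ L := by
      rcases habmem with h | h <;> rw [h]
      · exact (hsidemem lstar hlstar_mem).1
      · exact (hsidemem lstar hlstar_mem).2
    obtain ⟨iB, hiB⟩ := List.mem_iff_get.mp hBmem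
    have hnegTh : ∀ w, negTh (Clause.soSubst w ψ) =
        E₀ ∪ {(Tm.soSubst w lstar.lhs, Tm.soSubst w lstar.rhs)} := by
      intro w
      ext e
      simp only [negTh, Set.mem_setOf_eq, Set.mem_union, Set.mem_singleton_iff, hE₀def]
      constructor
      · rintro ⟨l', hl', hneg, rfl⟩
        obtain ⟨l, hlψ, rfl⟩ := List.mem_map.mp hl'
        rw [lit_soSubst_pos] at hneg
        rw [lit_soSubst_lhs, lit_soSubst_rhs]
        rw [hsplit] at hlψ
        rcases List.mem_append.mp hlψ with h | h
        · left
          refine ⟨l, Or.inl h, hneg, ?_⟩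
          obtain ⟨hz1, hz2⟩ := lit_sides_countF_zero (hothers l (Or.inl h))
          rw [soSubst_eq_of_countF_zero _ hz1 w wst, soSubst_eq_of_countF_zero _ hz2 w wst]
        · rcases List.mem_cons.mp h with rfl | h
          · right; rfl
          · left
            refine ⟨l, Or.inr h, hneg, ?_⟩
            obtain ⟨hz1, hz2⟩ := lit_sides_countF_zero (hothers l (Or.inr h))
            rw [soSubst_eq_of_countF_zero _ hz1 w wst, soSubst_eq_of_countF_zero _ hz2 w wst]
      · rintro (⟨l, hl, hneg, rfl⟩ | rfl)
        · refine ⟨Lit.soSubst w l, List.mem_map.mpr ⟨l, hmemuv l hl, rfl⟩, hneg, ?_⟩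
          obtain ⟨hz1, hz2⟩ := lit_sides_countF_zero (hothers l hl)
          rw [lit_soSubst_lhs, lit_soSubst_rhs, soSubst_eq_of_countF_zero _ hz1 w wst,
            soSubst_eq_of_countF_zero _ hz2 w wst]
        · exact ⟨Lit.soSubst w lstar, List.mem_map.mpr ⟨lstar, hlstar_mem, rfl⟩,
            hlstar_pred.1, rfl⟩
    have hval : ∀ w, (Clause.soSubst w ψ).valid ↔
        ∃ l ∈ ψ, l.pos = true ∧
          EqCons (E₀ ∪ {(Tm.soSubst w aT, Tm.soSubst wst bT)})
            (Tm.soSubst wst l.lhs) (Tm.soSubst wst l.rhs) := by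
      intro w
      rw [clause_valid_iff]
      constructor
      · rintro ⟨l', hl', hp, he⟩
        obtain ⟨l, hlψ, rfl⟩ := List.mem_map.mp hl'
        rw [lit_soSubst_pos] at hp
        refine ⟨l, hlψ, hp, ?_⟩
        obtain ⟨hz1, hz2⟩ := lit_sides_countF_zero (hpos0 l hlψ hp)
        rw [hnegTh w, lit_soSubst_lhs, lit_soSubst_rhs,
          soSubst_eq_of_countF_zero _ hz1 w wst, soSubst_eq_of_countF_zero _ hz2 w wst] at he
        exact (hpairIff w E₀ _ _).mp he
      · rintro ⟨l, hlψ, hp, he⟩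
        refine ⟨Lit.soSubst w l, List.mem_map.mpr ⟨l, hlψ, rfl⟩, hp, ?_⟩
        rw [hnegTh w]
        obtain ⟨hz1, hz2⟩ := lit_sides_countF_zero (hpos0 l hlψ hp)
        rw [lit_soSubst_lhs, lit_soSubst_rhs, soSubst_eq_of_countF_zero _ hz1 w wst,
          soSubst_eq_of_countF_zero _ hz2 w wst]
        exact (hpairIff w E₀ _ _).mpr he
    have hkey : ∀ (w1 w2 : Tm (F ⊕ Fin k) (varAr ar k)), stw L E₀ w1 = stw L E₀ w2 →
        ∀ {s t : Tm F ar}, s ∈ L → t ∈ L →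
          (EqCons (E₀ ∪ {(Tm.soSubst w1 aT, Tm.soSubst wst bT)}) s t ↔
            EqCons (E₀ ∪ {(Tm.soSubst w2 aT, Tm.soSubst wst bT)}) s t) := by
      intro w1 w2 hst s t hs ht
      obtain ⟨is_, his⟩ := List.mem_iff_get.mp hs
      obtain ⟨it_, hit⟩ := List.mem_iff_get.mp ht
      rw [← his, ← hit, ← hiB,
        fp_correct L hSubL E₀ hE₀ iB (Tm.soSubst w1 aT) is_ it_,
        fp_correct L hSubL E₀ hE₀ iB (Tm.soSubst w2 aT) is_ it_,
        Rstar_congr L hSubL E₀ hE₀ iB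
          (fun R => eval_soSubst_congr L E₀ hst aT haT.le R)]
    have hdet : ∀ w1 w2, stw L E₀ w1 = stw L E₀ w2 →
        ((Clause.soSubst w1 ψ).valid ↔ (Clause.soSubst w2 ψ).valid) := by
      intro w1 w2 hst
      rw [hval w1, hval w2]
      constructor
      · rintro ⟨l, hl, hp, he⟩
        exact ⟨l, hl, hp,
          (hkey w1 w2 hst (hsidemem l hl).1 (hsidemem l hl).2).mp he⟩
      · rintro ⟨l, hl, hp, he⟩
        exact ⟨l, hl, hp,
          (hkey w1 w2 hst (hsidemem l hl).1 (hsidemem l hl).2).mpr he⟩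
    refine ⟨theDTA L E₀ ψ, ?_⟩
    ext w
    show (Clause.soSubst w ψ).valid ↔ w ∈ (theDTA L E₀ ψ).lang
    constructor
    · intro hvw
      exact ⟨stw L E₀ w, ⟨w, rfl, hvw⟩, theDTA_run L E₀ ψ w⟩
    · rintro ⟨q, ⟨w', hw', hvw'⟩, hrun⟩
      rw [theDTA_run L E₀ ψ w] at hrun
      have hst : stw L E₀ w' = stw L E₀ w := by
        rw [hw']
        exact (Option.some_injective _ hrun).symm
      exact (hdet w' w hst).mp hvw'

end SyGuS
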